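/- Let P be a polymatroid on [n], h ∈ [n−1], and a ∈ P. Define the fiber F_a = {b ∈ P : b_t = a_t for all t ∈ [n]\{h, h+1\}}. Then F_a is an interval: if b, b' ∈ F_a with b_h < b'_h, then b + e_h − e_{h+1} ∈ F_a. In particular F_a = {b^1, …, b^l} with b^{i+1} = b^i + e_h − e_{h+1} for 1 ≤ i ≤ l−1. -/

import Mathlib

open Finset

/-- The `i`-th standard basis vector in `ℤ^n`. -/
def e {n : ℕ} (i : Fin n) : Fin n → ℤ := fun t => if t = i then 1 else 0

/-- Membership characterization of the polymatroid `P_f`. -/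
def IsPolymatroid {n : ℕ} (P : Set (Fin n → ℤ)) (f : Finset (Fin n) → ℤ) : Prop :=
  (f ∅ = 0) ∧ (∀ I J : Finset (Fin n), f (I ∪ J) + f (I ∩ J) ≤ f I + f J) ∧
    (∀ a : Fin n → ℤ, a ∈ P ↔
      (∀ I : Finset (Fin n), ∑ t ∈ I, a t ≤ f I) ∧ ∑ t, a t = f univ)

/-- `i` is internally active w.r.t. the basis `a` of `P` for the order `lt`. -/
def IntActO {n : ℕ} (P : Set (Fin n → ℤ)) (lt : Fin n → Fin n → Prop)
    (a : Fin n → ℤ) (i : Fin n) : Prop :=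
  ∀ j : Fin n, lt j i → a - e i + e j ∉ P

/-- `i` is externally active w.r.t. the basis `a` of `P` for the order `lt`. -/
def ExtActO {n : ℕ} (P : Set (Fin n → ℤ)) (lt : Fin n → Fin n → Prop)
    (a : Fin n → ℤ) (i : Fin n) : Prop :=
  ∀ j : Fin n, lt j i → a + e i - e j ∉ P

/-- Internal activity for the natural order on `Fin n`. -/
def IntAct {n : ℕ} (P : Set (Fin n → ℤ)) (a : Fin n → ℤ) (i : Fin n) : Prop :=
  IntActO P (· < ·) a i

/-- External activity for the natural order on `Fin n`. -/
def ExtAct {n : ℕ} (P : Set (Fin n → ℤ)) (a : Fin n → ℤ) (i : Fin n) : Prop :=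
  ExtActO P (· < ·) a i

noncomputable def oi {n : ℕ} (P : Set (Fin n → ℤ)) (a : Fin n → ℤ) : ℕ :=
  {i : Fin n | IntAct P a i ∧ ¬ ExtAct P a i}.ncard

noncomputable def oe {n : ℕ} (P : Set (Fin n → ℤ)) (a : Fin n → ℤ) : ℕ :=
  {i : Fin n | ExtAct P a i ∧ ¬ IntAct P a i}.ncard

noncomputable def ie {n : ℕ} (P : Set (Fin n → ℤ)) (a : Fin n → ℤ) : ℕ :=
  {i : Fin n | IntAct P a i ∧ ExtAct P a i}.ncard

/-- The polymatroid Tutte polynomial evaluated at `(x, y)`. -/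
noncomputable def TP {n : ℕ} (P : Set (Fin n → ℤ)) {R : Type*} [CommRing R]
    (x y : R) : R :=
  ∑ᶠ a ∈ P, x ^ oi P a * y ^ oe P a * (x + y - 1) ^ ie P a

theorem stmt16 {n : ℕ} (P : Set (Fin n → ℤ)) (f : Finset (Fin n) → ℤ)
    (hP : IsPolymatroid P f) (h h' : Fin n) (hh' : (h' : ℕ) = (h : ℕ) + 1)
    (a : Fin n → ℤ) (ha : a ∈ P)
    (F : Set (Fin n → ℤ))
    (hF : F = {b ∈ P | ∀ t : Fin n, t ≠ h → t ≠ h' → b t = a t})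
    (b b' : Fin n → ℤ) (hb : b ∈ F) (hb' : b' ∈ F) (hlt : b h < b' h) :
    b + e h - e h' ∈ F := by
  obtain ⟨-, -, hmem⟩ := hP
  subst hF
  obtain ⟨hbP, hbfix⟩ := hb
  obtain ⟨hb'P, hb'fix⟩ := hb'
  have hne : h ≠ h' := by
    intro hhe; rw [hhe] at hh'; omega
  obtain ⟨hbI, hbS⟩ := (hmem b).1 hbP
  obtain ⟨hb'I, hb'S⟩ := (hmem b').1 hb'P
  have hdiff : ∀ t, t ≠ h → t ≠ h' → b t = b' t := fun t h1 h2 =>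
    (hbfix t h1 h2).trans (hb'fix t h1 h2).symm
  have hsumI : ∀ I : Finset (Fin n), ∑ t ∈ I, (b + e h - e h') t
      = ∑ t ∈ I, b t + (if h ∈ I then 1 else 0) - (if h' ∈ I then 1 else 0) := by
    intro I
    simp only [Pi.sub_apply, Pi.add_apply, Finset.sum_sub_distrib,
      Finset.sum_add_distrib, e]
    rw [Finset.sum_ite_eq' I h (fun _ => (1:ℤ)),
      Finset.sum_ite_eq' I h' (fun _ => (1:ℤ))]
  have hcmp : ∀ I : Finset (Fin n), h ∈ I → h' ∉ I →
      ∑ t ∈ I, b' t = ∑ t ∈ I, b t + (b' h - b h) := by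
    intro I hIh hIh'
    have : ∑ t ∈ I, (b' t - b t) = b' h - b h := by
      apply Finset.sum_eq_single h
      · intro t htI htne
        have : b t = b' t := hdiff t htne (fun he => hIh' (he ▸ htI))
        omega
      · intro hc; exact absurd hIh hc
    have h2 : ∑ t ∈ I, (b' t - b t) = ∑ t ∈ I, b' t - ∑ t ∈ I, b t :=
      Finset.sum_sub_distrib _ _
    omega
  refine ⟨(hmem _).2 ⟨?_, ?_⟩, ?_⟩
  · intro I
    rw [hsumI I]
    by_cases h1 : h ∈ I <;> by_cases h2 : h' ∈ I <;> simp [h1, h2]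
    · exact hbI I
    · have := hcmp I h1 h2
      have := hb'I I
      have := hbI I
      omega
    · have := hbI I; omega
    · exact hbI I
  · have := hsumI Finset.univ
    simp only [Finset.mem_univ, if_true] at this
    rw [this]; omega
  · intro t h1 h2
    have : b t = a t := hbfix t h1 h2
    simp [e, h1, h2, this]
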